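/- For every continuously differentiable function v : ℝ → ℝ such that v and v' are square integrable on ℝ and v(x) → 0 as x → ±∞, one has ∫_ℝ v(x)⁴ dx ≤ ‖v‖_{L²(ℝ)}³ ‖v'‖_{L²(ℝ)}. -/

import Mathlib

open MeasureTheory Filter

private lemma cauchy_schwarz_integral (f g : ℝ → ℝ)
    (hfm : AEStronglyMeasurable f (volume : Measure ℝ))
    (hgm : AEStronglyMeasurable g (volume : Measure ℝ))
    (hf : Integrable (fun x => f x ^ 2))
    (hg : Integrable (fun x => g x ^ 2)) :
    ∫ x, |f x * g x| ≤ Real.sqrt (∫ x, f x ^ 2) * Real.sqrt (∫ x, g x ^ 2) := by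
  set I1 := ∫ x, f x ^ 2 with hI1
  set I2 := ∫ x, g x ^ 2 with hI2
  have hI1nn : 0 ≤ I1 := integral_nonneg fun x => sq_nonneg _
  have hI2nn : 0 ≤ I2 := integral_nonneg fun x => sq_nonneg _
  set A := Real.sqrt I1 with hA
  set B := Real.sqrt I2 with hB
  have hAnn : 0 ≤ A := Real.sqrt_nonneg _
  have hBnn : 0 ≤ B := Real.sqrt_nonneg _
  have hA2 : A ^ 2 = I1 := Real.sq_sqrt hI1nn
  have hB2 : B ^ 2 = I2 := Real.sq_sqrt hI2nn
  have hfgm : AEStronglyMeasurable (fun x => |f x * g x|) volume :=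
    (hfm.mul hgm).norm.congr (by filter_upwards with x; exact Real.norm_eq_abs _)
  -- helper: if ∫ f² = 0 then f = 0 a.e.
  have key0 : ∀ (h : ℝ → ℝ), AEStronglyMeasurable h (volume : Measure ℝ) →
      Integrable (fun x => h x ^ 2) → (∫ x, h x ^ 2) = 0 → ∀ᵐ x, h x = 0 := by
    intro h hm hint hzero
    have := (integral_eq_zero_iff_of_nonneg (fun x => sq_nonneg (h x)) hint).mp hzero
    filter_upwards [this] with x hx
    have : h x ^ 2 = 0 := hx
    exact pow_eq_zero_iff (n := 2) (by norm_num) |>.mp this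
  rcases eq_or_lt_of_le hI1nn with h1 | h1
  · -- I1 = 0 : f = 0 a.e.
    have hf0 := key0 f hfm hf h1.symm
    have : ∫ x, |f x * g x| = 0 := by
      rw [integral_eq_zero_iff_of_nonneg (fun x => abs_nonneg _) ?_]
      · filter_upwards [hf0] with x hx; simp [hx]
      · refine Integrable.mono' ((hf.add hg).div_const 2) hfgm ?_
        filter_upwards with x
        have h2 := two_mul_le_add_sq |f x| |g x|
        simp only [Pi.add_apply, Real.norm_eq_abs, abs_abs, abs_mul]
        simp only [sq_abs] at h2
        nlinarith [abs_nonneg (f x), abs_nonneg (g x)]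
    rw [this]
    positivity
  rcases eq_or_lt_of_le hI2nn with h2 | h2
  · have hg0 := key0 g hgm hg h2.symm
    have : ∫ x, |f x * g x| = 0 := by
      rw [integral_eq_zero_iff_of_nonneg (fun x => abs_nonneg _) ?_]
      · filter_upwards [hg0] with x hx; simp [hx]
      · refine Integrable.mono' ((hf.add hg).div_const 2) hfgm ?_
        filter_upwards with x
        have h2 := two_mul_le_add_sq |f x| |g x|
        simp only [Pi.add_apply, Real.norm_eq_abs, abs_abs, abs_mul]
        simp only [sq_abs] at h2
        nlinarith [abs_nonneg (f x), abs_nonneg (g x)]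
    rw [this]
    positivity
  -- main case : I1 > 0, I2 > 0
  have hApos : 0 < A := Real.sqrt_pos.mpr h1
  have hBpos : 0 < B := Real.sqrt_pos.mpr h2
  set t := B / A with ht
  have htpos : 0 < t := div_pos hBpos hApos
  have hbound : ∀ x, |f x * g x| ≤ (t * f x ^ 2 + g x ^ 2 / t) / 2 := by
    intro x
    have h2 := sq_nonneg (t * |f x| - |g x|)
    have key : 2 * t * (|f x| * |g x|) ≤ t ^ 2 * f x ^ 2 + g x ^ 2 := by
      nlinarith [sq_abs (f x), sq_abs (g x)]
    rw [abs_mul, ← sub_nonneg]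
    have heq : (t * f x ^ 2 + g x ^ 2 / t) / 2 - |f x| * |g x|
        = (t ^ 2 * f x ^ 2 + g x ^ 2 - 2 * t * (|f x| * |g x|)) / (2 * t) := by
      field_simp
    rw [heq]
    exact div_nonneg (by linarith) (by positivity)
  have hbint : Integrable (fun x => (t * f x ^ 2 + g x ^ 2 / t) / 2) :=
    ((hf.const_mul t).add (hg.div_const t)).div_const 2
  have hfgint : Integrable (fun x => |f x * g x|) := by
    refine Integrable.mono' hbint hfgm ?_
    filter_upwards with x
    rw [Real.norm_eq_abs, abs_abs]
    exact hbound x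
  have step : ∫ x, |f x * g x| ≤ ∫ x, (t * f x ^ 2 + g x ^ 2 / t) / 2 :=
    integral_mono hfgint hbint fun x => hbound x
  have comp : ∫ x, (t * f x ^ 2 + g x ^ 2 / t) / 2 = (t * I1 + I2 / t) / 2 := by
    rw [integral_div, integral_add (hf.const_mul t) (hg.div_const t),
      MeasureTheory.integral_const_mul, integral_div]
  have final : (t * I1 + I2 / t) / 2 = A * B := by
    rw [← hA2, ← hB2, ht]
    field_simp
    ring
  rw [comp, final] at step
  exact step

/-- Quartic interpolation estimate: ∫ v⁴ ≤ ‖v‖₂³ ‖v'‖₂. -/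
theorem integral_pow_four_le
    (v : ℝ → ℝ) (hv : ContDiff ℝ 1 v)
    (hv2 : Integrable (fun x => (v x) ^ 2))
    (hv'2 : Integrable (fun x => (deriv v x) ^ 2))
    (htop : Tendsto v atTop (nhds 0)) (hbot : Tendsto v atBot (nhds 0)) :
    ∫ x, (v x) ^ 4 ≤
      (Real.sqrt (∫ x, (v x) ^ 2)) ^ 3 * Real.sqrt (∫ x, (deriv v x) ^ 2) := by
  have hvc : Continuous v := hv.continuous
  have hv'c : Continuous (deriv v) := hv.continuous_deriv le_rfl
  set w := fun x => 2 * v x * deriv v x with hw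
  have hd : ∀ x, HasDerivAt (fun y => v y ^ 2) (w x) x := by
    intro x
    have := ((hv.differentiable one_ne_zero x).hasDerivAt).fun_pow 2
    simpa [hw, mul_comm, mul_assoc] using this
  have hwc : Continuous w := (continuous_const.mul hvc).mul hv'c
  have hwint : Integrable w := by
    refine Integrable.mono' (hv2.add hv'2) hwc.aestronglyMeasurable ?_
    filter_upwards with x
    simp only [Real.norm_eq_abs, Pi.add_apply, hw]
    rw [abs_mul, abs_mul, abs_two]
    nlinarith [sq_abs (v x), sq_abs (deriv v x), sq_nonneg (|v x| - |deriv v x|)]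
  have htop2 : Tendsto (fun x => v x ^ 2) atTop (nhds 0) := by
    simpa using htop.pow 2
  have hbot2 : Tendsto (fun x => v x ^ 2) atBot (nhds 0) := by
    simpa using hbot.pow 2
  have hIic : ∀ x, ∫ y in Set.Iic x, w y = v x ^ 2 := by
    intro x
    have := integral_Iic_of_hasDerivAt_of_tendsto' (f := fun y => v y ^ 2) (a := x)
      (fun y _ => hd y) hwint.integrableOn hbot2
    simpa using this
  have hIoi : ∀ x, ∫ y in Set.Ioi x, w y = - v x ^ 2 := by
    intro x
    have := integral_Ioi_of_hasDerivAt_of_tendsto' (f := fun y => v y ^ 2) (a := x)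
      (fun y _ => hd y) hwint.integrableOn htop2
    simpa using this
  set C := ∫ y, |v y * deriv v y| with hC
  have hCnn : 0 ≤ C := integral_nonneg fun y => abs_nonneg _
  have habs : ∀ y, |w y| = 2 * |v y * deriv v y| := by
    intro y
    simp only [hw, mul_assoc]
    rw [abs_mul, abs_two]
  have hwabsint : Integrable (fun y => |w y|) := hwint.abs
  have hintabs : ∫ y, |w y| = 2 * C := by
    simp_rw [habs]
    rw [MeasureTheory.integral_const_mul]
  have keybound : ∀ x, v x ^ 2 ≤ C := by
    intro x
    have h1 : v x ^ 2 ≤ ∫ y in Set.Iic x, |w y| := by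
      rw [← hIic x]
      calc ∫ y in Set.Iic x, w y ≤ |∫ y in Set.Iic x, w y| := le_abs_self _
        _ ≤ ∫ y in Set.Iic x, |w y| := by
            simpa [Real.norm_eq_abs] using
              norm_integral_le_integral_norm (μ := volume.restrict (Set.Iic x)) w
    have h2 : v x ^ 2 ≤ ∫ y in Set.Ioi x, |w y| := by
      have : v x ^ 2 = -(∫ y in Set.Ioi x, w y) := by rw [hIoi x]; ring
      rw [this]
      calc -(∫ y in Set.Ioi x, w y) ≤ |∫ y in Set.Ioi x, w y| := neg_le_abs _
        _ ≤ ∫ y in Set.Ioi x, |w y| := by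
            simpa [Real.norm_eq_abs] using
              norm_integral_le_integral_norm (μ := volume.restrict (Set.Ioi x)) w
    have hsplit : (∫ y in Set.Iic x, |w y|) + ∫ y in Set.Ioi x, |w y| = ∫ y, |w y| :=
      intervalIntegral.integral_Iic_add_Ioi hwabsint.integrableOn hwabsint.integrableOn
    have := hintabs
    linarith
  have hv4int : Integrable (fun x => v x ^ 4) := by
    refine Integrable.mono' (hv2.const_mul C) (hvc.pow 4).aestronglyMeasurable ?_
    filter_upwards with x
    rw [Real.norm_eq_abs, abs_of_nonneg (by positivity)]
    nlinarith [keybound x, sq_nonneg (v x)]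
  have step1 : ∫ x, v x ^ 4 ≤ ∫ x, C * v x ^ 2 := by
    refine integral_mono hv4int (hv2.const_mul C) fun x => ?_
    nlinarith [keybound x, sq_nonneg (v x)]
  have step2 : ∫ x, C * v x ^ 2 = C * ∫ x, v x ^ 2 := MeasureTheory.integral_const_mul _ _
  set I1 := ∫ x, v x ^ 2 with hI1
  set I2 := ∫ x, deriv v x ^ 2 with hI2
  have hI1nn : 0 ≤ I1 := integral_nonneg fun x => sq_nonneg _
  have hCle : C ≤ Real.sqrt I1 * Real.sqrt I2 :=
    cauchy_schwarz_integral v (deriv v) hvc.aestronglyMeasurable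
      hv'c.aestronglyMeasurable hv2 hv'2
  have step3 : C * I1 ≤ Real.sqrt I1 * Real.sqrt I2 * I1 :=
    mul_le_mul_of_nonneg_right hCle hI1nn
  have final : Real.sqrt I1 * Real.sqrt I2 * I1 = Real.sqrt I1 ^ 3 * Real.sqrt I2 := by
    rw [show Real.sqrt I1 ^ 3 = I1 * Real.sqrt I1 from by
      rw [pow_succ, Real.sq_sqrt hI1nn]]
    ring
  calc ∫ x, v x ^ 4 ≤ ∫ x, C * v x ^ 2 := step1
    _ = C * I1 := step2
    _ ≤ Real.sqrt I1 * Real.sqrt I2 * I1 := step3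
    _ = Real.sqrt I1 ^ 3 * Real.sqrt I2 := final
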